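/- Let S = ℚ[x₁,…,xₙ], I ⊆ S an ideal, and R = S/I. Let S_ℤ = ℤ[x₁,…,xₙ], J = I ∩ S_ℤ, and R_ℤ = S_ℤ/J, regarded as a subring of R. Then for every ℚ-linear differential operator δ ∈ D_{R|ℚ} there exists a positive integer c such that cδ(R_ℤ) ⊆ R_ℤ; furthermore, the restriction of cδ to R_ℤ is a ℤ-linear differential operator on R_ℤ, i.e., cδ|_{R_ℤ} ∈ D_{R_ℤ|ℤ}. -/
import Mathlib


/-- `δ` is an `A`-linear differential operator on `R` of order at most `n`:
order-zero operators are multiplications by elements of `R`, and `δ` has order at most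
`n+1` if all commutators `[δ, r]` have order at most `n`. -/
def IsDiffOpOfOrder (A : Type*) {R : Type*} [CommRing A] [CommRing R] [Algebra A R] :
    ℕ → (R →ₗ[A] R) → Prop
  | 0 => fun δ => ∃ r : R, ∀ x, δ x = r * x
  | (n+1) => fun δ => ∀ r : R,
      IsDiffOpOfOrder A n (δ ∘ₗ LinearMap.mulLeft A r - LinearMap.mulLeft A r ∘ₗ δ)

/-- `δ` is an `A`-linear differential operator on `R`. -/
def IsDiffOp (A : Type*) {R : Type*} [CommRing A] [CommRing R] [Algebra A R]
    (δ : R →ₗ[A] R) : Prop :=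
  ∃ n, IsDiffOpOfOrder A n δ

section aux

variable {A R : Type*} [CommRing A] [CommRing R] [Algebra A R]

/-- Natural-number multiples of differential operators of order at most `m` again have
order at most `m`. -/
lemma isDiffOpOfOrder_nsmul : ∀ (m : ℕ) (δ : R →ₗ[A] R), IsDiffOpOfOrder A m δ →
    ∀ c : ℕ, IsDiffOpOfOrder A m (c • δ)
  | 0, δ, ⟨r, hr⟩, c => ⟨c • r, fun x => by simp [hr, smul_mul_assoc, mul_assoc]⟩
  | (m+1), δ, h, c => fun r => by
      have := isDiffOpOfOrder_nsmul m _ (h r) c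
      convert this using 1
      ext x
      simp [smul_sub]; ring

/-- If an operator `ε` of order at most `m` on a `ℚ`-algebra `S` restricts along an
injective ring map `f : R →+* S` to a `ℤ`-linear operator `ε'` on `R`, then `ε'` has
order at most `m` as well. -/
lemma isDiffOpOfOrder_transfer {R S : Type*} [CommRing R] [CommRing S] [Algebra ℚ S]
    (f : R →+* S) (hf : Function.Injective f) :
    ∀ (m : ℕ) (ε : S →ₗ[ℚ] S) (ε' : R →ₗ[ℤ] R),
      (∀ x, f (ε' x) = ε (f x)) → IsDiffOpOfOrder ℚ m ε → IsDiffOpOfOrder ℤ m ε'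
  | 0, ε, ε', hcomm, ⟨s, hs⟩ => by
      refine ⟨ε' 1, fun x => hf ?_⟩
      rw [hcomm, hs, map_mul, hcomm, hs, map_one, mul_one]
  | (m+1), ε, ε', hcomm, h => fun r => by
      refine isDiffOpOfOrder_transfer f hf m _ _ (fun x => ?_) (h (f r))
      simp only [LinearMap.sub_apply, LinearMap.comp_apply, LinearMap.mulLeft_apply,
        map_sub, map_mul, hcomm]

end aux

open MvPolynomial in
/-- Every polynomial with rational coefficients has a positive integer multiple with
integer coefficients. -/
lemma lemA {n : ℕ} (p : MvPolynomial (Fin n) ℚ) :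
    ∃ c : ℕ, 0 < c ∧ ∃ q : MvPolynomial (Fin n) ℤ,
      MvPolynomial.map (Int.castRingHom ℚ) q = c • p := by
  induction p using MvPolynomial.induction_on with
  | C a =>
      refine ⟨a.den, a.den_pos, C a.num, ?_⟩
      rw [MvPolynomial.map_C, ← map_nsmul (C : ℚ →+* MvPolynomial (Fin n) ℚ),
        nsmul_eq_mul, Rat.den_mul_eq_num]
      simp
  | add p q hp hq =>
      obtain ⟨c1, hc1, q1, hq1⟩ := hp
      obtain ⟨c2, hc2, q2, hq2⟩ := hq
      refine ⟨c1 * c2, by positivity, c2 • q1 + c1 • q2, ?_⟩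
      rw [map_add, map_nsmul, map_nsmul, hq1, hq2, smul_add, smul_smul, smul_smul]
      rw [mul_comm c2 c1]
  | mul_X p i hp =>
      obtain ⟨c1, hc1, q1, hq1⟩ := hp
      refine ⟨c1, hc1, q1 * MvPolynomial.X i, ?_⟩
      rw [map_mul, MvPolynomial.map_X, hq1, smul_mul_assoc]

section main

variable {n : ℕ} (I : Ideal (MvPolynomial (Fin n) ℚ))

local notation "φ" => Ideal.quotientMap I (MvPolynomial.map (Int.castRingHom ℚ)) le_rfl

/-- Every element of `R = ℚ[x]/I` has a positive integer multiple in the image of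
`R_ℤ = ℤ[x]/J`. -/
lemma lemB (y : MvPolynomial (Fin n) ℚ ⧸ I) :
    ∃ c : ℕ, 0 < c ∧ ∃ z, φ z = c • y := by
  obtain ⟨p, rfl⟩ := Ideal.Quotient.mk_surjective y
  obtain ⟨c, hc, q, hq⟩ := lemA p
  exact ⟨c, hc, Ideal.Quotient.mk _ q, by rw [Ideal.quotientMap_mk, hq, map_nsmul]⟩

set_option maxHeartbeats 1000000 in
set_option synthInstance.maxHeartbeats 200000 in
/-- For a differential operator `δ` of order at most `m` on `R = ℚ[x]/I` there is a
positive integer `c` such that `cδ` maps the image of `R_ℤ` into itself. -/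
lemma lemC (m : ℕ) (δ : (MvPolynomial (Fin n) ℚ ⧸ I) →ₗ[ℚ] (MvPolynomial (Fin n) ℚ ⧸ I))
    (h : IsDiffOpOfOrder ℚ m δ) :
    ∃ c : ℕ, 0 < c ∧ ∀ x, ∃ z, φ z = c • δ (φ x) := by
  induction m generalizing δ with
  | zero =>
      obtain ⟨r, hr⟩ := h
      obtain ⟨c, hc, z0, hz0⟩ := lemB I r
      refine ⟨c, hc, fun x => ⟨z0 * x, ?_⟩⟩
      rw [map_mul, hz0, hr, smul_mul_assoc]
  | succ m IH =>
      obtain ⟨c0, hc0, z0, hz0⟩ := lemB I (δ 1)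
      choose cc hcc zz hzz using fun i : Fin n =>
        IH _ (h (Ideal.Quotient.mk I (MvPolynomial.X i)))
      set c : ℕ := c0 * ∏ i, cc i with hcdef
      have hcpos : 0 < c := by
        apply Nat.mul_pos hc0
        exact Finset.prod_pos (fun i _ => hcc i)
      refine ⟨c, hcpos, ?_⟩
      have key : ∀ q : MvPolynomial (Fin n) ℤ,
          ∃ z, φ z = c • δ (φ (Ideal.Quotient.mk _ q)) := by
        intro q
        induction q using MvPolynomial.induction_on with
        | C a =>
            refine ⟨a • (∏ i, cc i) • z0, ?_⟩
            have h1 : (φ (Ideal.Quotient.mk _ (MvPolynomial.C a)))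
                = (a : MvPolynomial (Fin n) ℚ ⧸ I) := by
              rw [Ideal.quotientMap_mk, MvPolynomial.map_C]
              simp [map_intCast]
            rw [h1, map_zsmul, map_nsmul, hz0]
            have h2 : (a : MvPolynomial (Fin n) ℚ ⧸ I) = a • (1 : MvPolynomial (Fin n) ℚ ⧸ I) := by
              simp
            rw [h2, map_zsmul, smul_comm (c : ℕ) a, hcdef, mul_comm c0, mul_smul]
        | add p q hp hq =>
            obtain ⟨z1, hz1⟩ := hp
            obtain ⟨z2, hz2⟩ := hq
            refine ⟨z1 + z2, ?_⟩
            rw [map_add, hz1, hz2, map_add, map_add, map_add, smul_add]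
        | mul_X p i hp =>
            obtain ⟨z, hz⟩ := hp
            set r := Ideal.Quotient.mk I (MvPolynomial.X i) with hrdef
            set u := φ (Ideal.Quotient.mk _ p) with hudef
            set k : ℕ := c0 * ∏ j ∈ Finset.univ.erase i, cc j with hkdef
            have hfac : c = k * cc i := by
              rw [hcdef, hkdef, mul_assoc, Finset.prod_erase_mul _ _ (Finset.mem_univ i)]
            refine ⟨k • zz i (Ideal.Quotient.mk _ p)
                + Ideal.Quotient.mk _ (MvPolynomial.X i) * z, ?_⟩
            have h1 : φ (Ideal.Quotient.mk _ (p * MvPolynomial.X i)) = r * u := by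
              rw [Ideal.quotientMap_mk, map_mul, MvPolynomial.map_X, map_mul,
                ← Ideal.quotientMap_mk (H := le_rfl), hudef, mul_comm]
            have h2 : δ (r * u) =
                (δ ∘ₗ LinearMap.mulLeft ℚ r - LinearMap.mulLeft ℚ r ∘ₗ δ) u + r * δ u := by
              simp
            rw [map_add, map_nsmul, hzz, map_mul, hz, h1, h2, smul_add]
            have h3 : φ (Ideal.Quotient.mk _ (MvPolynomial.X i)) = r := by
              rw [Ideal.quotientMap_mk, MvPolynomial.map_X, hrdef]
            rw [h3, smul_smul, ← hfac, mul_smul_comm]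
      intro x
      obtain ⟨q, rfl⟩ := Ideal.Quotient.mk_surjective x
      exact key q

end main

set_option maxHeartbeats 1000000 in
set_option synthInstance.maxHeartbeats 400000 in
/-- Lemma `LemmaClearCoef`.  Let `S = ℚ[x₁,…,xₙ]`, `I ⊆ S` an ideal
and `R = S/I`; let `S_ℤ = ℤ[x₁,…,xₙ]`, `J = I ∩ S_ℤ` and `R_ℤ = S_ℤ/J ⊆ R`.  Then for
every `δ ∈ D_{R|ℚ}` there is a positive integer `c` with `cδ(R_ℤ) ⊆ R_ℤ`, and the
restriction of `cδ` to `R_ℤ` is a `ℤ`-linear differential operator on `R_ℤ`. -/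
theorem clear_denominators_of_diffOp
    (n : ℕ) (I : Ideal (MvPolynomial (Fin n) ℚ))
    (δ : (MvPolynomial (Fin n) ℚ ⧸ I) →ₗ[ℚ] (MvPolynomial (Fin n) ℚ ⧸ I))
    (hδ : IsDiffOp ℚ δ) :
    ∃ c : ℕ, 0 < c ∧
      ∃ δ' : (MvPolynomial (Fin n) ℤ ⧸
            (I.comap (MvPolynomial.map (Int.castRingHom ℚ)))) →ₗ[ℤ]
          (MvPolynomial (Fin n) ℤ ⧸ (I.comap (MvPolynomial.map (Int.castRingHom ℚ)))),
        IsDiffOp ℤ δ' ∧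
        ∀ x : MvPolynomial (Fin n) ℤ ⧸ (I.comap (MvPolynomial.map (Int.castRingHom ℚ))),
          Ideal.quotientMap I (MvPolynomial.map (Int.castRingHom ℚ)) le_rfl (δ' x) =
            c • δ (Ideal.quotientMap I (MvPolynomial.map (Int.castRingHom ℚ)) le_rfl x) := by
  obtain ⟨m, hm⟩ := hδ
  obtain ⟨c, hc, hk⟩ := lemC I m δ hm
  choose g hg using hk
  set φ := Ideal.quotientMap I (MvPolynomial.map (Int.castRingHom ℚ)) le_rfl with hφ
  have hinj : Function.Injective φ := Ideal.quotientMap_injective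
  have hgadd : ∀ x y, g (x + y) = g x + g y := by
    intro x y
    apply hinj
    rw [map_add, hg, hg, hg, map_add, map_add, smul_add]
  have hgsmul : ∀ (z : ℤ) (x), g (z • x) = z • g x := by
    intro z x
    apply hinj
    rw [map_zsmul, hg, hg, map_zsmul, map_zsmul, smul_comm]
  refine ⟨c, hc, ⟨⟨g, hgadd⟩, hgsmul⟩, ⟨m, ?_⟩, hg⟩
  refine isDiffOpOfOrder_transfer φ hinj m (c • δ) _ (fun x => ?_)
    (isDiffOpOfOrder_nsmul m δ hm c)
  exact hg x
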